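/- The function $g(x) = \sum_{n\ge 0}(-\alpha^2/4)^n E_n(x)$, where $E_n(x) = \sum_{j=0}^{n}\frac{e^{2jx}(x+H_{n-j}-H_j)}{j!^2(n-j)!^2}$ and $\alpha$ is any complex number, satisfies the differential equation $g''(x) + \alpha^2 e^{2x} g(x) = 0$. -/

import Mathlib

open Finset

/-- The `n`-th harmonic number, with `H 0 = 0`. -/
noncomputable def H (n : ℕ) : ℂ := ∑ i ∈ Finset.range n, (1 : ℂ) / (i + 1)

/-- `E_n(x) = ∑_{j=0}^{n} e^{2jx}(x + H_{n-j} - H_j)/(j!² (n-j)!²)` (complex-valued,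
real variable). -/
noncomputable def E (n : ℕ) (x : ℝ) : ℂ :=
  ∑ j ∈ Finset.range (n + 1),
    Complex.exp (2 * j * x) * (x + H (n - j) - H j) /
      ((j.factorial : ℂ) ^ 2 * ((n - j).factorial : ℂ) ^ 2)

/-- Termwise first derivative of `E`. -/
noncomputable def E1 (n : ℕ) (x : ℝ) : ℂ :=
  ∑ j ∈ Finset.range (n + 1),
    Complex.exp (2 * j * x) * (2 * j * (x + H (n - j) - H j) + 1) /
      ((j.factorial : ℂ) ^ 2 * ((n - j).factorial : ℂ) ^ 2)

/-- Termwise second derivative of `E`. -/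
noncomputable def E2 (n : ℕ) (x : ℝ) : ℂ :=
  ∑ j ∈ Finset.range (n + 1),
    Complex.exp (2 * j * x) * (4 * j ^ 2 * (x + H (n - j) - H j) + 4 * j) /
      ((j.factorial : ℂ) ^ 2 * ((n - j).factorial : ℂ) ^ 2)

lemma H_succ (k : ℕ) : H (k + 1) = H k + 1 / (k + 1) := by
  simp [H, Finset.sum_range_succ]

lemma norm_H_le (m : ℕ) : ‖H m‖ ≤ m := by
  calc ‖H m‖ ≤ ∑ i ∈ Finset.range m, ‖(1 : ℂ) / (i + 1)‖ := norm_sum_le _ _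
    _ ≤ ∑ i ∈ Finset.range m, 1 := by
        refine Finset.sum_le_sum fun i _ => ?_
        have hcast : ((i : ℂ) + 1) = ((i + 1 : ℕ) : ℂ) := by push_cast; ring
        rw [norm_div, norm_one, hcast, Complex.norm_natCast]
        rw [div_le_one (by positivity)]
        exact_mod_cast Nat.one_le_iff_ne_zero.2 (Nat.succ_ne_zero i)
    _ = m := by simp

lemma hasDerivAt_ofReal' (x : ℝ) : HasDerivAt (fun y : ℝ => (y : ℂ)) 1 x := by
  exact (hasDerivAt_id x).ofReal_comp

lemma hasDerivAt_E (n : ℕ) (x : ℝ) : HasDerivAt (E n) (E1 n x) x := by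
  unfold E E1
  apply HasDerivAt.fun_sum
  intro j _
  have hre := hasDerivAt_ofReal' x
  have hlin : HasDerivAt (fun y : ℝ => (2 : ℂ) * j * y) (2 * j) x := by
    simpa using hre.const_mul ((2 : ℂ) * j)
  have hexp : HasDerivAt (fun y : ℝ => Complex.exp (2 * j * y))
      (Complex.exp (2 * j * x) * (2 * j)) x := hlin.cexp
  have haff : HasDerivAt (fun y : ℝ => (y : ℂ) + H (n - j) - H j) 1 x := by
    simpa using (hre.add_const (H (n - j))).sub_const (H j)
  have := (hexp.fun_mul haff).div_const ((j.factorial : ℂ) ^ 2 * ((n - j).factorial : ℂ) ^ 2)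
  exact this.congr_deriv (by ring)

lemma hasDerivAt_E1 (n : ℕ) (x : ℝ) : HasDerivAt (E1 n) (E2 n x) x := by
  unfold E1 E2
  apply HasDerivAt.fun_sum
  intro j _
  have hre := hasDerivAt_ofReal' x
  have hlin : HasDerivAt (fun y : ℝ => (2 : ℂ) * j * y) (2 * j) x := by
    simpa using hre.const_mul ((2 : ℂ) * j)
  have hexp : HasDerivAt (fun y : ℝ => Complex.exp (2 * j * y))
      (Complex.exp (2 * j * x) * (2 * j)) x := hlin.cexp
  have haff : HasDerivAt (fun y : ℝ => (2 : ℂ) * j * ((y : ℂ) + H (n - j) - H j) + 1)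
      (2 * j) x := by
    simpa using (((hre.add_const (H (n - j))).sub_const (H j)).const_mul
      ((2 : ℂ) * j)).add_const 1
  have := (hexp.fun_mul haff).div_const ((j.factorial : ℂ) ^ 2 * ((n - j).factorial : ℂ) ^ 2)
  exact this.congr_deriv (by ring)

lemma E2_zero (x : ℝ) : E2 0 x = 0 := by
  simp [E2]

lemma E2_succ (n : ℕ) (x : ℝ) : E2 (n + 1) x = 4 * Complex.exp (2 * x) * E n x := by
  unfold E2 E
  rw [Finset.sum_range_succ']
  simp only [Nat.cast_zero, Nat.cast_add, Nat.cast_one]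
  have h0 : Complex.exp (2 * (0:ℂ) * x) * (4 * (0:ℂ) ^ 2 * (x + H (n + 1 - 0) - H 0) + 4 * 0) /
      ((Nat.factorial 0 : ℂ) ^ 2 * ((n + 1 - 0).factorial : ℂ) ^ 2) = 0 := by
    simp
  rw [h0, add_zero, Finset.mul_sum]
  refine Finset.sum_congr rfl fun k hk => ?_
  have hk' : k ≤ n := by simpa [Nat.lt_succ_iff] using hk
  have hsub : n + 1 - (k + 1) = n - k := by omega
  have hfac : ((k + 1).factorial : ℂ) = (k + 1) * (k.factorial : ℂ) := by
    push_cast [Nat.factorial_succ]; ring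
  have hHk : H (k + 1) = H k + 1 / ((k : ℂ) + 1) := by
    have := H_succ k
    push_cast at this ⊢
    exact this
  have hexp : Complex.exp (2 * ((k : ℂ) + 1) * x) =
      Complex.exp (2 * x) * Complex.exp (2 * k * x) := by
    rw [← Complex.exp_add]; ring_nf
  have hk1 : ((k : ℂ) + 1) ≠ 0 := by
    have : (0:ℝ) < (k:ℝ) + 1 := by positivity
    intro h
    have := congrArg Complex.re h
    simp at this
    linarith
  have hkfac : (k.factorial : ℂ) ≠ 0 := Nat.cast_ne_zero.2 (Nat.factorial_ne_zero k)
  have hnkfac : ((n - k).factorial : ℂ) ≠ 0 := Nat.cast_ne_zero.2 (Nat.factorial_ne_zero _)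
  rw [hsub, hfac, hHk, hexp]
  field_simp
  ring

open Real in
/-- generic bound for the sums appearing in `E`, `E1`, `E2`. -/
lemma norm_sum_le_aux (B : ℝ) (hB : 1 ≤ B) (n : ℕ) (y : ℝ) (hy : |y| ≤ B) (w : ℕ → ℂ)
    (hw : ∀ j, j ≤ n → ‖w j‖ ≤ (2 * n + 1) ^ 2 * (B + 2 * n + 1)) :
    ‖∑ j ∈ Finset.range (n + 1),
        Complex.exp (2 * j * y) * w j / ((j.factorial : ℂ) ^ 2 * ((n - j).factorial : ℂ) ^ 2)‖
      ≤ (n + 1) * ((2 * n + 1) ^ 2 * (B + 2 * n + 1)) * Real.exp (2 * n * B) * 4 ^ n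
          / (n.factorial : ℝ) ^ 2 := by
  have hfac : ∀ j, j ≤ n → ((n.factorial : ℝ)) ^ 2 ≤
      4 ^ n * ((j.factorial : ℝ) ^ 2 * ((n - j).factorial : ℝ) ^ 2) := by
    intro j hj
    have hchoose : n.choose j ≤ 2 ^ n := by
      calc n.choose j ≤ ∑ i ∈ Finset.range (n + 1), n.choose i :=
            Finset.single_le_sum (f := fun i => n.choose i) (fun i _ => Nat.zero_le _)
              (Finset.mem_range.2 (Nat.lt_succ_of_le hj))
        _ = 2 ^ n := Nat.sum_range_choose n
    have hid : n.factorial = n.choose j * (j.factorial * (n - j).factorial) := by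
      rw [← Nat.choose_mul_factorial_mul_factorial hj]; ring
    have : n.factorial ≤ 2 ^ n * (j.factorial * (n - j).factorial) := by
      rw [hid]
      exact Nat.mul_le_mul_right _ hchoose
    have h' : (n.factorial : ℝ) ≤ 2 ^ n * ((j.factorial : ℝ) * ((n - j).factorial : ℝ)) := by
      exact_mod_cast this
    calc ((n.factorial : ℝ)) ^ 2 ≤ (2 ^ n * ((j.factorial : ℝ) * ((n - j).factorial : ℝ))) ^ 2 := by
          apply pow_le_pow_left₀ (by positivity) h'
      _ = 4 ^ n * ((j.factorial : ℝ) ^ 2 * ((n - j).factorial : ℝ) ^ 2) := by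
          have h2n : ((2:ℝ) ^ n) ^ 2 = 4 ^ n := by
            rw [← pow_mul, mul_comm, pow_mul]; norm_num
          rw [mul_pow, h2n, mul_pow]
  calc ‖∑ j ∈ Finset.range (n + 1),
        Complex.exp (2 * j * y) * w j / ((j.factorial : ℂ) ^ 2 * ((n - j).factorial : ℂ) ^ 2)‖
      ≤ ∑ j ∈ Finset.range (n + 1),
        ‖Complex.exp (2 * j * y) * w j / ((j.factorial : ℂ) ^ 2 * ((n - j).factorial : ℂ) ^ 2)‖ :=
        norm_sum_le _ _
    _ ≤ ∑ j ∈ Finset.range (n + 1),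
        ((2 * n + 1) ^ 2 * (B + 2 * n + 1)) * Real.exp (2 * n * B) * 4 ^ n
          / (n.factorial : ℝ) ^ 2 := by
        refine Finset.sum_le_sum fun j hj => ?_
        have hjn : j ≤ n := by simpa [Nat.lt_succ_iff] using hj
        have hden : ((j.factorial : ℂ) ^ 2 * ((n - j).factorial : ℂ) ^ 2) =
            (((j.factorial : ℝ) ^ 2 * ((n - j).factorial : ℝ) ^ 2 : ℝ) : ℂ) := by push_cast; ring
        have hdenpos : (0:ℝ) < (j.factorial : ℝ) ^ 2 * ((n - j).factorial : ℝ) ^ 2 := by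
          positivity
        rw [norm_div, norm_mul, hden, Complex.norm_real,
          Real.norm_of_nonneg hdenpos.le]
        rw [show (‖Complex.exp (2 * ↑j * ↑y)‖ : ℝ) = ‖Complex.exp (2 * ↑j * ↑y)‖ from rfl]
        have hexp : ‖Complex.exp (2 * j * y)‖ ≤ Real.exp (2 * n * B) := by
          have : ((2 : ℂ) * j * y).re = 2 * j * y := by
            simp [Complex.mul_re, Complex.ofReal_re]
          rw [Complex.norm_exp, this]
          apply Real.exp_le_exp.2
          have hyB : y ≤ B := le_trans (le_abs_self y) hy
          have h1 : 2 * (j:ℝ) * y ≤ 2 * (j:ℝ) * B := by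
            rcases le_or_gt y B with h | h
            · nlinarith [abs_nonneg y, neg_abs_le y, Nat.cast_nonneg (α := ℝ) j]
            · linarith
          have h2 : 2 * (j:ℝ) * B ≤ 2 * (n:ℝ) * B := by
            have : (j:ℝ) ≤ n := by exact_mod_cast hjn
            nlinarith
          linarith
        have hwj := hw j hjn
        have hnum : ‖Complex.exp (2 * j * y)‖ * ‖w j‖ ≤
            Real.exp (2 * n * B) * ((2 * n + 1) ^ 2 * (B + 2 * n + 1)) := by
          apply mul_le_mul hexp hwj (norm_nonneg _) (Real.exp_pos _).le
        rw [div_le_div_iff₀ hdenpos (by positivity)]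
        calc ‖Complex.exp (2 * j * y)‖ * ‖w j‖ * (n.factorial : ℝ) ^ 2
            ≤ (Real.exp (2 * n * B) * ((2 * n + 1) ^ 2 * (B + 2 * n + 1))) *
              (4 ^ n * ((j.factorial : ℝ) ^ 2 * ((n - j).factorial : ℝ) ^ 2)) := by
              apply mul_le_mul hnum (hfac j hjn) (by positivity)
              positivity
          _ = (2 * n + 1) ^ 2 * (B + 2 * n + 1) * Real.exp (2 * n * B) * 4 ^ n *
              ((j.factorial : ℝ) ^ 2 * ((n - j).factorial : ℝ) ^ 2) := by ring
    _ = (n + 1) * ((2 * n + 1) ^ 2 * (B + 2 * n + 1)) * Real.exp (2 * n * B) * 4 ^ n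
          / (n.factorial : ℝ) ^ 2 := by
        rw [Finset.sum_const, Finset.card_range]
        push_cast
        ring

lemma two_mul_add_one_le (n : ℕ) : (2 * (n:ℝ) + 1) ≤ 2 * 2 ^ n := by
  induction n with
  | zero => norm_num
  | succ k ih =>
    push_cast
    push_cast at ih
    have h1 : (1:ℝ) ≤ 2 ^ k := one_le_pow₀ (by norm_num)
    calc 2 * ((k:ℝ) + 1) + 1 = (2 * k + 1) + 2 := by ring
      _ ≤ 2 * 2 ^ k + 2 := by linarith
      _ ≤ 2 * 2 ^ (k + 1) := by rw [pow_succ]; nlinarith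

/-- comparison of the explicit bound with a summable majorant. -/
lemma le_u (B L : ℝ) (hB : 1 ≤ B) (hL : 0 ≤ L) (n : ℕ) :
    L ^ n * ((n + 1) * ((2 * n + 1) ^ 2 * (B + 2 * n + 1)) * Real.exp (2 * n * B) * 4 ^ n
      / (n.factorial : ℝ) ^ 2)
    ≤ 64 * (B + 1) * ((64 * (L + 1) * Real.exp (2 * B)) ^ n / (n.factorial : ℝ)) := by
  have hfacpos : (0:ℝ) < (n.factorial : ℝ) := by exact_mod_cast n.factorial_pos
  have hfacsq : (n.factorial : ℝ) ≤ (n.factorial : ℝ) ^ 2 := by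
    nlinarith [show (1:ℝ) ≤ (n.factorial : ℝ) by exact_mod_cast n.factorial_pos]
  have hexp : Real.exp (2 * n * B) = (Real.exp (2 * B)) ^ n := by
    rw [← Real.exp_nat_mul]; ring_nf
  have h1 : ((n:ℝ) + 1) ≤ 2 * 2 ^ n := by
    have := two_mul_add_one_le n
    nlinarith [show (0:ℝ) ≤ (n:ℝ) by positivity]
  have h2 : (2 * (n:ℝ) + 1) ^ 2 ≤ 4 * 4 ^ n := by
    have := two_mul_add_one_le n
    have hp : (0:ℝ) ≤ 2 * (n:ℝ) + 1 := by positivity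
    calc (2 * (n:ℝ) + 1) ^ 2 ≤ (2 * 2 ^ n) ^ 2 := by nlinarith
      _ = 4 * 4 ^ n := by
          have h2n : ((2:ℝ) ^ n) ^ 2 = 4 ^ n := by
            rw [← pow_mul, mul_comm, pow_mul]; norm_num
          rw [mul_pow, h2n]; norm_num
  have h3 : (B + 2 * (n:ℝ) + 1) ≤ (B + 1) * (2 * 2 ^ n) := by
    have := two_mul_add_one_le n
    have hpn : (1:ℝ) ≤ 2 ^ n := one_le_pow₀ (by norm_num)
    nlinarith
  have h4 : L ^ n ≤ (L + 1) ^ n := pow_le_pow_left₀ hL (by linarith) n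
  have hE : (0:ℝ) < Real.exp (2 * B) := Real.exp_pos _
  -- main numerator inequality
  have key : L ^ n * ((n + 1) * ((2 * n + 1) ^ 2 * (B + 2 * n + 1)) *
      Real.exp (2 * n * B) * 4 ^ n)
      ≤ 64 * (B + 1) * (64 * (L + 1) * Real.exp (2 * B)) ^ n := by
    rw [hexp, mul_pow, mul_pow]
    have e1 : (0:ℝ) ≤ (n:ℝ) + 1 := by positivity
    have e2 : (0:ℝ) ≤ (2 * (n:ℝ) + 1) ^ 2 := by positivity
    have e3 : (0:ℝ) ≤ B + 2 * (n:ℝ) + 1 := by positivity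
    have e4 : (0:ℝ) ≤ (Real.exp (2*B)) ^ n := by positivity
    have e5 : (0:ℝ) ≤ L ^ n := pow_nonneg hL n
    have c1 : ((n:ℝ) + 1) * ((2 * n + 1) ^ 2 * (B + 2 * n + 1)) ≤
        (2 * 2 ^ n) * ((4 * 4 ^ n) * ((B + 1) * (2 * 2 ^ n))) := by
      have hbp : (0:ℝ) ≤ (B + 1) * (2 * 2 ^ n) := by positivity
      apply mul_le_mul h1 _ (by positivity) (by positivity)
      apply mul_le_mul h2 h3 e3 (by positivity)
    have c2 : (2 * (2:ℝ) ^ n) * ((4 * 4 ^ n) * ((B + 1) * (2 * 2 ^ n))) =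
        16 * (B + 1) * (2 ^ n * 4 ^ n * 2 ^ n) := by ring
    have c3 : (2:ℝ) ^ n * 4 ^ n * 2 ^ n ≤ 16 ^ n := by
      rw [← mul_pow, ← mul_pow]
      norm_num
    calc L ^ n * ((↑n + 1) * ((2 * ↑n + 1) ^ 2 * (B + 2 * ↑n + 1)) * (Real.exp (2*B)) ^ n * 4 ^ n)
        ≤ (L + 1) ^ n * ((16 * (B + 1) * 16 ^ n) * (Real.exp (2*B)) ^ n * 4 ^ n) := by
          have hLp : (0:ℝ) ≤ (L+1)^n := by positivity
          have := le_trans c1 (le_of_eq c2)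
          have h' : ((n:ℝ) + 1) * ((2 * n + 1) ^ 2 * (B + 2 * n + 1)) ≤ 16 * (B+1) * 16 ^ n := by
            calc ((n:ℝ) + 1) * ((2 * n + 1) ^ 2 * (B + 2 * n + 1)) ≤
                16 * (B + 1) * (2 ^ n * 4 ^ n * 2 ^ n) := le_trans c1 (le_of_eq c2)
              _ ≤ 16 * (B+1) * 16 ^ n := by
                  apply mul_le_mul_of_nonneg_left c3 (by positivity)
          have hmono : ((n:ℝ) + 1) * ((2 * n + 1) ^ 2 * (B + 2 * n + 1)) * (Real.exp (2*B)) ^ n * 4 ^ n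
              ≤ 16 * (B+1) * 16 ^ n * (Real.exp (2*B)) ^ n * 4 ^ n := by
            apply mul_le_mul_of_nonneg_right _ (by positivity)
            apply mul_le_mul_of_nonneg_right h' e4
          calc L ^ n * ((↑n + 1) * ((2 * ↑n + 1) ^ 2 * (B + 2 * ↑n + 1)) * (Real.exp (2*B)) ^ n * 4 ^ n)
              ≤ (L+1) ^ n * ((↑n + 1) * ((2 * ↑n + 1) ^ 2 * (B + 2 * ↑n + 1)) * (Real.exp (2*B)) ^ n * 4 ^ n) := by
                apply mul_le_mul_of_nonneg_right h4 (by positivity)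
            _ ≤ (L + 1) ^ n * ((16 * (B + 1) * 16 ^ n) * (Real.exp (2*B)) ^ n * 4 ^ n) := by
                apply mul_le_mul_of_nonneg_left hmono hLp
      _ = 16 * (B + 1) * ((16 ^ n * 4 ^ n) * (L + 1) ^ n * (Real.exp (2*B)) ^ n) := by ring
      _ ≤ 64 * (B + 1) * (64 ^ n * (L + 1) ^ n * (Real.exp (2*B)) ^ n) := by
          have : (16:ℝ) ^ n * 4 ^ n = 64 ^ n := by rw [← mul_pow]; norm_num
          rw [this]
          nlinarith [show (0:ℝ) ≤ 64 ^ n * (L + 1) ^ n * (Real.exp (2*B)) ^ n by positivity,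
            show (1:ℝ) ≤ B + 1 by linarith]
  -- now divide
  have lhs_eq : L ^ n * ((n + 1) * ((2 * n + 1) ^ 2 * (B + 2 * n + 1)) * Real.exp (2 * n * B) * 4 ^ n
      / (n.factorial : ℝ) ^ 2) =
      (L ^ n * ((n + 1) * ((2 * n + 1) ^ 2 * (B + 2 * n + 1)) * Real.exp (2 * n * B) * 4 ^ n))
        / (n.factorial : ℝ) ^ 2 := by ring
  rw [lhs_eq]
  calc (L ^ n * ((n + 1) * ((2 * n + 1) ^ 2 * (B + 2 * n + 1)) * Real.exp (2 * n * B) * 4 ^ n))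
        / (n.factorial : ℝ) ^ 2
      ≤ (64 * (B + 1) * (64 * (L + 1) * Real.exp (2 * B)) ^ n) / (n.factorial : ℝ) ^ 2 := by
        exact div_le_div_of_nonneg_right key (by positivity)
    _ ≤ (64 * (B + 1) * (64 * (L + 1) * Real.exp (2 * B)) ^ n) / (n.factorial : ℝ) := by
        exact div_le_div_of_nonneg_left (by positivity) hfacpos hfacsq
    _ = 64 * (B + 1) * ((64 * (L + 1) * Real.exp (2 * B)) ^ n / (n.factorial : ℝ)) := by ring

set_option maxHeartbeats 2000000 in
theorem stmt_3 (α : ℂ) (g : ℝ → ℂ) (hg : ∀ x : ℝ, g x = ∑' n : ℕ, (-(α ^ 2) / 4) ^ n * E n x)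
    (x : ℝ) :
    deriv (deriv g) x + α ^ 2 * Complex.exp (2 * x) * g x = 0 := by
  set lam : ℂ := -(α ^ 2) / 4 with hlam
  set B : ℝ := |x| + 2 with hBdef
  have hB : 1 ≤ B := by have := abs_nonneg x; simp only [hBdef]; linarith
  set L : ℝ := ‖lam‖ with hLdef
  have hL : 0 ≤ L := norm_nonneg _
  set u : ℕ → ℝ :=
    fun n => 64 * (B + 1) * ((64 * (L + 1) * Real.exp (2 * B)) ^ n / (n.factorial : ℝ)) with hu_def
  have hu : Summable u := (Real.summable_pow_div_factorial _).mul_left _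
  have hxB : |x| ≤ B := by simp only [hBdef]; linarith
  have hball : ∀ y ∈ Metric.ball x 1, |y| ≤ B := by
    intro y hy
    have h1 : |y - x| < 1 := by simpa [Real.dist_eq] using hy
    have h2 := abs_sub_abs_le_abs_sub y x
    simp only [hBdef]
    linarith
  -- bound on the affine part
  have haff : ∀ (n j : ℕ) (y : ℝ), j ≤ n → |y| ≤ B →
      ‖(y:ℂ) + H (n - j) - H j‖ ≤ B + 2 * n := by
    intro n j y hj hy
    have h1 : ‖(y:ℂ)‖ = |y| := by rw [Complex.norm_real, Real.norm_eq_abs]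
    have h2 := norm_H_le (n - j)
    have h3 := norm_H_le j
    have h4 : ((n - j : ℕ) : ℝ) ≤ n := by exact_mod_cast Nat.cast_le.2 (Nat.sub_le n j)
    have h5 : ((j : ℕ) : ℝ) ≤ n := by exact_mod_cast Nat.cast_le.2 hj
    calc ‖(y:ℂ) + H (n - j) - H j‖ ≤ ‖(y:ℂ) + H (n - j)‖ + ‖H j‖ := norm_sub_le _ _
      _ ≤ ‖(y:ℂ)‖ + ‖H (n - j)‖ + ‖H j‖ := by linarith [norm_add_le ((y:ℂ)) (H (n - j))]
      _ ≤ B + 2 * n := by rw [h1]; linarith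
  have hpoly : ∀ n : ℕ, (0:ℝ) ≤ (n:ℝ) := fun n => Nat.cast_nonneg n
  -- the three norm bounds
  have hbE : ∀ (n : ℕ) (y : ℝ), |y| ≤ B → ‖lam ^ n * E n y‖ ≤ u n := by
    intro n y hy
    have h1 : ‖E n y‖ ≤ (n + 1) * ((2 * n + 1) ^ 2 * (B + 2 * n + 1)) * Real.exp (2 * n * B) *
        4 ^ n / (n.factorial : ℝ) ^ 2 := by
      have hw : ∀ j, j ≤ n → ‖(y:ℂ) + H (n - j) - H j‖ ≤
          (2 * n + 1) ^ 2 * (B + 2 * n + 1) := by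
        intro j hj
        have := haff n j y hj hy
        have hn := hpoly n
        have e1 : (0:ℝ) ≤ 4 * (n:ℝ) ^ 2 + 4 * n := by positivity
        have e2 : (0:ℝ) ≤ B + 2 * (n:ℝ) + 1 := by linarith
        nlinarith [mul_nonneg e1 e2]
      simpa [E] using norm_sum_le_aux B hB n y hy (fun j => (y:ℂ) + H (n - j) - H j) hw
    calc ‖lam ^ n * E n y‖ = L ^ n * ‖E n y‖ := by rw [norm_mul, norm_pow]
      _ ≤ L ^ n * ((n + 1) * ((2 * n + 1) ^ 2 * (B + 2 * n + 1)) * Real.exp (2 * n * B) *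
          4 ^ n / (n.factorial : ℝ) ^ 2) := by
          exact mul_le_mul_of_nonneg_left h1 (pow_nonneg hL n)
      _ ≤ u n := le_u B L hB hL n
  have hbE1 : ∀ (n : ℕ) (y : ℝ), |y| ≤ B → ‖lam ^ n * E1 n y‖ ≤ u n := by
    intro n y hy
    have h1 : ‖E1 n y‖ ≤ (n + 1) * ((2 * n + 1) ^ 2 * (B + 2 * n + 1)) * Real.exp (2 * n * B) *
        4 ^ n / (n.factorial : ℝ) ^ 2 := by
      have hw : ∀ j, j ≤ n →
          ‖(2:ℂ) * j * ((y:ℂ) + H (n - j) - H j) + 1‖ ≤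
          (2 * n + 1) ^ 2 * (B + 2 * n + 1) := by
        intro j hj
        have ha := haff n j y hj hy
        have hn := hpoly n
        have hjn : ((j:ℕ):ℝ) ≤ n := by exact_mod_cast Nat.cast_le.2 hj
        have hnn : (0:ℝ) ≤ ‖(y:ℂ) + H (n - j) - H j‖ := norm_nonneg _
        have hb0 : (0:ℝ) ≤ B := by linarith
        have hnorm : ‖(2:ℂ) * j * ((y:ℂ) + H (n - j) - H j) + 1‖ ≤
            2 * (j:ℝ) * ‖(y:ℂ) + H (n - j) - H j‖ + 1 := by
          calc ‖(2:ℂ) * j * ((y:ℂ) + H (n - j) - H j) + 1‖ ≤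
              ‖(2:ℂ) * j * ((y:ℂ) + H (n - j) - H j)‖ + ‖(1:ℂ)‖ := norm_add_le _ _
            _ = 2 * (j:ℝ) * ‖(y:ℂ) + H (n - j) - H j‖ + 1 := by
                simp [norm_mul]
        have step1 : 2 * (j:ℝ) * ‖(y:ℂ) + H (n - j) - H j‖ ≤ 2 * n * (B + 2 * n) := by
          have h2j : 2 * (j:ℝ) ≤ 2 * n := by linarith
          have := mul_le_mul h2j ha hnn (by positivity)
          linarith
        calc ‖(2:ℂ) * j * ((y:ℂ) + H (n - j) - H j) + 1‖
            ≤ 2 * (n:ℝ) * (B + 2 * n) + 1 := by linarith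
          _ ≤ (2 * n + 1) ^ 2 * (B + 2 * n + 1) := by
              nlinarith [mul_nonneg hn hb0, mul_nonneg (mul_nonneg hn hn) hn,
                mul_nonneg (mul_nonneg hn hn) hb0, mul_nonneg hn hn]
      simpa [E1] using norm_sum_le_aux B hB n y hy
        (fun j : ℕ => (2:ℂ) * j * ((y:ℂ) + H (n - j) - H j) + 1) hw
    calc ‖lam ^ n * E1 n y‖ = L ^ n * ‖E1 n y‖ := by rw [norm_mul, norm_pow]
      _ ≤ L ^ n * ((n + 1) * ((2 * n + 1) ^ 2 * (B + 2 * n + 1)) * Real.exp (2 * n * B) *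
          4 ^ n / (n.factorial : ℝ) ^ 2) := by
          exact mul_le_mul_of_nonneg_left h1 (pow_nonneg hL n)
      _ ≤ u n := le_u B L hB hL n
  have hbE2 : ∀ (n : ℕ) (y : ℝ), |y| ≤ B → ‖lam ^ n * E2 n y‖ ≤ u n := by
    intro n y hy
    have h1 : ‖E2 n y‖ ≤ (n + 1) * ((2 * n + 1) ^ 2 * (B + 2 * n + 1)) * Real.exp (2 * n * B) *
        4 ^ n / (n.factorial : ℝ) ^ 2 := by
      have hw : ∀ j, j ≤ n →
          ‖(4:ℂ) * (j:ℂ) ^ 2 * ((y:ℂ) + H (n - j) - H j) + 4 * j‖ ≤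
          (2 * n + 1) ^ 2 * (B + 2 * n + 1) := by
        intro j hj
        have ha := haff n j y hj hy
        have hn := hpoly n
        have hjn : ((j:ℕ):ℝ) ≤ n := by exact_mod_cast Nat.cast_le.2 hj
        have hnn : (0:ℝ) ≤ ‖(y:ℂ) + H (n - j) - H j‖ := norm_nonneg _
        have hjr := hpoly j
        have hb0 : (0:ℝ) ≤ B := by linarith
        have hnorm : ‖(4:ℂ) * (j:ℂ) ^ 2 * ((y:ℂ) + H (n - j) - H j) + 4 * j‖ ≤
            4 * (j:ℝ) ^ 2 * ‖(y:ℂ) + H (n - j) - H j‖ + 4 * j := by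
          calc ‖(4:ℂ) * (j:ℂ) ^ 2 * ((y:ℂ) + H (n - j) - H j) + 4 * j‖ ≤
              ‖(4:ℂ) * (j:ℂ) ^ 2 * ((y:ℂ) + H (n - j) - H j)‖ + ‖(4:ℂ) * j‖ := norm_add_le _ _
            _ = 4 * (j:ℝ) ^ 2 * ‖(y:ℂ) + H (n - j) - H j‖ + 4 * j := by
                simp [norm_mul]
        have hsq : (j:ℝ) ^ 2 ≤ (n:ℝ) ^ 2 := by nlinarith
        have step1 : 4 * (j:ℝ) ^ 2 * ‖(y:ℂ) + H (n - j) - H j‖ ≤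
            4 * (n:ℝ) ^ 2 * (B + 2 * n) := by
          have h4j : 4 * (j:ℝ) ^ 2 ≤ 4 * (n:ℝ) ^ 2 := by linarith
          have := mul_le_mul h4j ha hnn (by positivity)
          linarith
        calc ‖(4:ℂ) * (j:ℂ) ^ 2 * ((y:ℂ) + H (n - j) - H j) + 4 * j‖
            ≤ 4 * (n:ℝ) ^ 2 * (B + 2 * n) + 4 * n := by linarith
          _ ≤ (2 * n + 1) ^ 2 * (B + 2 * n + 1) := by
              nlinarith [mul_nonneg hn hb0, mul_nonneg (mul_nonneg hn hn) hn,
                mul_nonneg (mul_nonneg hn hn) hb0, mul_nonneg hn hn]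
      simpa [E2] using norm_sum_le_aux B hB n y hy
        (fun j : ℕ => (4:ℂ) * (j:ℂ) ^ 2 * ((y:ℂ) + H (n - j) - H j) + 4 * j) hw
    calc ‖lam ^ n * E2 n y‖ = L ^ n * ‖E2 n y‖ := by rw [norm_mul, norm_pow]
      _ ≤ L ^ n * ((n + 1) * ((2 * n + 1) ^ 2 * (B + 2 * n + 1)) * Real.exp (2 * n * B) *
          4 ^ n / (n.factorial : ℝ) ^ 2) := by
          exact mul_le_mul_of_nonneg_left h1 (pow_nonneg hL n)
      _ ≤ u n := le_u B L hB hL n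
  -- differentiate the series twice
  have hg' : g = fun y => ∑' n : ℕ, lam ^ n * E n y := funext hg
  have hsum0 : Summable (fun n : ℕ => lam ^ n * E n x) :=
    Summable.of_norm_bounded hu fun n => hbE n x hxB
  have hsum1 : Summable (fun n : ℕ => lam ^ n * E1 n x) :=
    Summable.of_norm_bounded hu fun n => hbE1 n x hxB
  have hsum2 : Summable (fun n : ℕ => lam ^ n * E2 n x) :=
    Summable.of_norm_bounded hu fun n => hbE2 n x hxB
  have hd1 : ∀ y ∈ Metric.ball x 1, HasDerivAt g (∑' n : ℕ, lam ^ n * E1 n y) y := by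
    intro y hy
    rw [hg']
    exact hasDerivAt_tsum_of_isPreconnected hu Metric.isOpen_ball
      (convex_ball x 1).isPreconnected
      (fun n z _ => (hasDerivAt_E n z).const_mul (lam ^ n))
      (fun n z hz => hbE1 n z (hball z hz))
      (Metric.mem_ball_self one_pos) hsum0 hy
  have hd2 : HasDerivAt (fun y : ℝ => ∑' n : ℕ, lam ^ n * E1 n y)
      (∑' n : ℕ, lam ^ n * E2 n x) x :=
    hasDerivAt_tsum_of_isPreconnected hu Metric.isOpen_ball
      (convex_ball x 1).isPreconnected
      (fun n z _ => (hasDerivAt_E1 n z).const_mul (lam ^ n))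
      (fun n z hz => hbE2 n z (hball z hz))
      (Metric.mem_ball_self one_pos) hsum1 (Metric.mem_ball_self one_pos)
  have hEE : deriv g =ᶠ[nhds x] fun y : ℝ => ∑' n : ℕ, lam ^ n * E1 n y := by
    filter_upwards [Metric.isOpen_ball.mem_nhds (Metric.mem_ball_self one_pos)] with y hy
    exact (hd1 y hy).deriv
  have hdd : deriv (deriv g) x = ∑' n : ℕ, lam ^ n * E2 n x := by
    rw [hEE.deriv_eq]
    exact hd2.deriv
  rw [hdd, hg x, Summable.tsum_eq_zero_add hsum2]
  have hterm : ∀ n : ℕ, lam ^ (n + 1) * E2 (n + 1) x =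
      (-(α ^ 2) * Complex.exp (2 * x)) * (lam ^ n * E n x) := by
    intro n
    rw [E2_succ, pow_succ, hlam]
    ring
  rw [tsum_congr hterm, tsum_mul_left, E2_zero]
  ring
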